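/- arXiv:1506.05815 — 5 statements merged into one kernel-verified Lean document; each statement's English description precedes it below -/
import Mathlib

section
/- If 0 ≤ σ₊ < σ₋ and t > 0, then |g^σ(t)|²·(|z^σ(t)|² + |w^σ(t)|²) < 1, where g^σ(t) := e^{it(E_σ-ε)/2} with E_σ = E + i(σ₋-σ₊)/2. -/
open Complex Filter

lemma hasDerivAt_normSq' (u : ℝ → ℂ) (u' : ℂ) (s : ℝ) (hu : HasDerivAt u u' s) :
    HasDerivAt (fun x => Complex.normSq (u x)) (2 * ((starRingEnd ℂ) (u s) * u').re) s := by
  have hconj : HasDerivAt (fun x => (starRingEnd ℂ) (u x)) ((starRingEnd ℂ) u') s := by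
    exact (Complex.conjCLE.hasFDerivAt.comp_hasDerivAt s hu)
  have hmul := hconj.mul hu
  have hre := Complex.reCLM.hasFDerivAt.comp_hasDerivAt s hmul
  have heq : (fun x => Complex.normSq (u x))
      = fun x => Complex.reCLM ((starRingEnd ℂ) (u x) * u x) := by
    funext x
    simp [Complex.normSq_apply, Complex.mul_re, Complex.conj_re, Complex.conj_im]
  rw [heq]
  convert hre using 1
  · rfl
  · rfl
  · rfl
  simp [Complex.add_re, Complex.mul_re, Complex.conj_re, Complex.conj_im]
  ring

lemma ode_contraction (δ η : ℝ) (hδ : 0 < δ) (a : ℂ) (ha : a.im = δ)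
    (u₁ u₂ : ℝ → ℂ) (h10 : u₁ 0 = 1) (h20 : u₂ 0 = 0)
    (h1 : ∀ s : ℝ, HasDerivAt u₁ (Complex.I * (a * u₁ s + (η : ℂ) * u₂ s)) s)
    (h2 : ∀ s : ℝ, HasDerivAt u₂ (Complex.I * ((η : ℂ) * u₁ s)) s)
    (t : ℝ) (ht : 0 < t) :
    Complex.normSq (u₁ t) + Complex.normSq (u₂ t) < 1 := by
  set F : ℝ → ℝ := fun s => Complex.normSq (u₁ s) + Complex.normSq (u₂ s) with hFdef
  have hF : ∀ s, HasDerivAt F (-2 * δ * Complex.normSq (u₁ s)) s := by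
    intro s
    have hA := hasDerivAt_normSq' _ _ s (h1 s)
    have hB := hasDerivAt_normSq' _ _ s (h2 s)
    have hAB := hA.add hB
    convert hAB using 1
    · rfl
    · rfl
    · rfl
    simp only [Complex.mul_re, Complex.add_re, Complex.add_im, Complex.mul_im,
      Complex.I_re, Complex.I_im, Complex.conj_re, Complex.conj_im,
      Complex.ofReal_re, Complex.ofReal_im, Complex.normSq_apply]
    rw [← ha]
    ring
  have hdiff : Differentiable ℝ F := fun s => (hF s).differentiableAt
  have hanti : Antitone F := by
    apply antitone_of_deriv_nonpos hdiff
    intro s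
    rw [(hF s).deriv]
    have := Complex.normSq_nonneg (u₁ s)
    nlinarith
  have hF0 : F 0 = 1 := by simp [hFdef, h10, h20]
  have hd0 : HasDerivAt F (-2 * δ) 0 := by simpa [h10] using hF 0
  rw [hasDerivAt_iff_tendsto_slope] at hd0
  have hneg : ∀ᶠ s in nhdsWithin (0:ℝ) {(0:ℝ)}ᶜ, slope F 0 s < 0 := by
    apply hd0.eventually_lt_const
    nlinarith
  have hneg' : ∀ᶠ s in nhdsWithin (0:ℝ) (Set.Ioi 0), slope F 0 s < 0 :=
    hneg.filter_mono (nhdsWithin_mono 0 (fun x hx => ne_of_gt hx))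
  have hmem : ∀ᶠ s in nhdsWithin (0:ℝ) (Set.Ioi 0), 0 < s ∧ s ≤ t := by
    filter_upwards [Ioc_mem_nhdsGT_of_mem ⟨le_rfl, ht⟩] with s hs
    exact ⟨hs.1, hs.2⟩
  obtain ⟨s, hs1, hs2, hs3⟩ := (hneg'.and hmem).exists
  have hFs : F s < F 0 := by
    rw [slope_def_field] at hs1
    have hsub : (F s - F 0) / (s - 0) < 0 := hs1
    rw [div_neg_iff] at hsub
    rcases hsub with ⟨_, h⟩ | ⟨h, _⟩
    · linarith
    · linarith
  calc F t ≤ F s := hanti hs3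
    _ < 1 := by rw [hF0] at hFs; exact hFs

/-- if `0 ≤ σ₊ < σ₋` and `t > 0`, then
`|g^σ(t)|²·(|z^σ(t)|² + |w^σ(t)|²) < 1`, where `g^σ(t) = exp(it(Eσ-ε)/2)`,
`Eσ = E + i(σ₋-σ₊)/2`, and `z^σ, w^σ` are as in the repeated-interaction model. -/
theorem gzw_contraction (E ε η σp σm : ℝ) (hE : 0 < E) (hε : 0 < ε) (hη : 0 < η)
    (hσ : 0 ≤ σp) (hσσ : σp < σm)
    (Eσ : ℂ) (hEσ : Eσ = (E : ℂ) + Complex.I * ((σm : ℂ) - σp) / 2)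
    (ν : ℂ) (hν : ν ^ 2 = (Eσ - ε) ^ 2 / 4 + (η : ℂ) ^ 2) (hν0 : ν ≠ 0)
    (g z w : ℂ → ℂ)
    (hg : ∀ s : ℂ, g s = Complex.exp (Complex.I * s * (Eσ - ε) / 2))
    (hz : ∀ s : ℂ, z s = Complex.cos (s * ν)
        + Complex.I * (Eσ - ε) / (2 * ν) * Complex.sin (s * ν))
    (hw : ∀ s : ℂ, w s = (2 * Complex.I * η) / (2 * ν) * Complex.sin (s * ν))
    (t : ℝ) (ht : 0 < t) :
    ‖g (t : ℂ)‖ ^ 2 * (‖z (t : ℂ)‖ ^ 2 + ‖w (t : ℂ)‖ ^ 2) < 1 := by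
  set a : ℂ := Eσ - (ε : ℂ) with hadef
  have hδ : (0:ℝ) < (σm - σp) / 2 := by linarith
  have haim : a.im = (σm - σp) / 2 := by
    rw [hadef, hEσ]
    simp [Complex.add_im, Complex.sub_im, Complex.div_im, Complex.mul_im]
  clear_value a
  set u₁ : ℝ → ℂ := fun s => Complex.exp (Complex.I * (s : ℂ) * a / 2) *
      (Complex.cos ((s : ℂ) * ν) + Complex.I * a / (2 * ν) * Complex.sin ((s : ℂ) * ν)) with hu₁def
  set u₂ : ℝ → ℂ := fun s => Complex.exp (Complex.I * (s : ℂ) * a / 2) *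
      ((2 * Complex.I * (η : ℂ)) / (2 * ν) * Complex.sin ((s : ℂ) * ν)) with hu₂def
  have h10 : u₁ 0 = 1 := by simp [hu₁def]
  have h20 : u₂ 0 = 0 := by simp [hu₂def]
  have hge : ∀ ζ : ℂ, HasDerivAt (fun y : ℂ => Complex.exp (Complex.I * y * a / 2))
      (Complex.exp (Complex.I * ζ * a / 2) * (Complex.I * a / 2)) ζ := by
    intro ζ
    have hinner : HasDerivAt (fun y : ℂ => Complex.I * y * a / 2) (Complex.I * a / 2) ζ := by
      simpa using (((hasDerivAt_id ζ).const_mul Complex.I).mul_const a).div_const 2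
    exact hinner.cexp
  have hsin : ∀ ζ : ℂ, HasDerivAt (fun y : ℂ => Complex.sin (y * ν))
      (Complex.cos (ζ * ν) * ν) ζ := fun ζ => by simpa using ((hasDerivAt_id ζ).mul_const ν).csin
  have hcos : ∀ ζ : ℂ, HasDerivAt (fun y : ℂ => Complex.cos (y * ν))
      (-Complex.sin (ζ * ν) * ν) ζ := fun ζ => by simpa using ((hasDerivAt_id ζ).mul_const ν).ccos
  have h1 : ∀ s : ℝ, HasDerivAt u₁ (Complex.I * (a * u₁ s + (η : ℂ) * u₂ s)) s := by
    intro s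
    have hzc : HasDerivAt (fun y : ℂ => Complex.cos (y * ν)
        + Complex.I * a / (2 * ν) * Complex.sin (y * ν))
        (-Complex.sin ((s:ℂ) * ν) * ν + Complex.I * a / (2 * ν) * (Complex.cos ((s:ℂ) * ν) * ν))
        (s : ℂ) := (hcos _).add ((hsin _).const_mul _)
    have hprod := ((hge (s:ℂ)).mul hzc).comp_ofReal
    convert hprod using 1
    · rfl
    simp only [hu₁def, hu₂def]
    field_simp
    linear_combination (4 * Complex.sin ((s:ℂ) * ν)) * hν
      + (Complex.sin ((s:ℂ) * ν) * (a^2 + 4*(η:ℂ)^2)) * Complex.I_sq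
  have h2 : ∀ s : ℝ, HasDerivAt u₂ (Complex.I * ((η : ℂ) * u₁ s)) s := by
    intro s
    have hwc : HasDerivAt (fun y : ℂ => (2 * Complex.I * (η:ℂ)) / (2 * ν) * Complex.sin (y * ν))
        ((2 * Complex.I * (η:ℂ)) / (2 * ν) * (Complex.cos ((s:ℂ) * ν) * ν)) (s : ℂ) :=
      (hsin _).const_mul _
    have hprod := ((hge (s:ℂ)).mul hwc).comp_ofReal
    convert hprod using 1
    · rfl
    simp only [hu₁def, hu₂def]
    field_simp
    ring
  have key := ode_contraction ((σm - σp)/2) η hδ a haim u₁ u₂ h10 h20 h1 h2 t ht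
  rw [hg, hz, hw]
  rw [Complex.sq_norm, Complex.sq_norm, Complex.sq_norm, mul_add,
    ← Complex.normSq_mul, ← Complex.normSq_mul]
  simpa [hu₁def, hu₂def, hadef] using key
end

section
/- The Gaussian characteristic function E(θ) = exp(−(|θ|²/4)·c) with c ≥ 1 is positive definite in the Weyl/CCR sense: for every finite family θ₁,…,θ_K ∈ ℂ and z₁,…,z_K ∈ ℂ, one has Σ_{k,k'} conj(z_k)·z_{k'} · exp(−i·Im(conj(θ_k)·θ_{k'})/2) · E(θ_k − θ_{k'}) ≥ 0 (the double sum is real and nonnegative). -/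
open Complex Finset Nat

lemma qf_gram {K : ℕ} (a w : Fin K → ℂ) :
    ∑ k : Fin K, ∑ k' : Fin K,
        (starRingEnd ℂ) (a k) * a k' * (w k * (starRingEnd ℂ) (w k'))
      = ((Complex.normSq (∑ k : Fin K, a k * (starRingEnd ℂ) (w k)) : ℝ) : ℂ) := by
  rw [Complex.normSq_eq_conj_mul_self, map_sum, Finset.sum_mul_sum]
  refine Finset.sum_congr rfl fun k _ => Finset.sum_congr rfl fun k' _ => ?_
  simp only [map_mul, Complex.conj_conj]
  ring

lemma qf_pow {K : ℕ} (a : Fin K → ℂ) (u : Fin 3 → Fin K → ℂ) (n : ℕ) :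
    ∑ k : Fin K, ∑ k' : Fin K,
        (starRingEnd ℂ) (a k) * a k'
          * (∑ i : Fin 3, u i k * (starRingEnd ℂ) (u i k')) ^ n
      = ∑ f : Fin n → Fin 3,
          ((Complex.normSq (∑ k : Fin K, a k * (starRingEnd ℂ) (∏ j, u (f j) k)) : ℝ) : ℂ) := by
  have h : ∀ k k' : Fin K, (∑ i : Fin 3, u i k * (starRingEnd ℂ) (u i k')) ^ n
      = ∑ f : Fin n → Fin 3,
          (∏ j, u (f j) k) * (starRingEnd ℂ) (∏ j, u (f j) k') := by
    intro k k'
    have : (∑ i : Fin 3, u i k * (starRingEnd ℂ) (u i k')) ^ n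
        = ∏ _j : Fin n, (∑ i : Fin 3, u i k * (starRingEnd ℂ) (u i k')) := by
      rw [Finset.prod_const, Finset.card_univ, Fintype.card_fin]
    rw [this, Finset.prod_univ_sum]
    rw [Fintype.piFinset_univ]
    refine Finset.sum_congr rfl fun f _ => ?_
    rw [Finset.prod_mul_distrib, map_prod]
  simp_rw [h, Finset.mul_sum]
  have step1 : ∀ k : Fin K, ∑ k' : Fin K, ∑ f : Fin n → Fin 3,
        (starRingEnd ℂ) (a k) * a k' * ((∏ j, u (f j) k) * (starRingEnd ℂ) (∏ j, u (f j) k'))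
      = ∑ f : Fin n → Fin 3, ∑ k' : Fin K,
        (starRingEnd ℂ) (a k) * a k' * ((∏ j, u (f j) k) * (starRingEnd ℂ) (∏ j, u (f j) k')) :=
    fun k => Finset.sum_comm
  rw [Finset.sum_congr rfl fun k _ => step1 k, Finset.sum_comm]
  exact Finset.sum_congr rfl fun f _ => qf_gram a fun k => ∏ j, u (f j) k


/-- the Gaussian characteristic function `E(θ) = exp(−c|θ|²/4)` with
`c ≥ 1` is positive definite in the twisted (Weyl/CCR) sense. -/
theorem gaussian_twisted_posdef (c : ℝ) (hc : 1 ≤ c)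
    (E : ℂ → ℂ) (hE : ∀ θ : ℂ, E θ = Complex.exp (-(c * ‖θ‖ ^ 2 / 4 : ℝ)))
    (K : ℕ) (θ z : Fin K → ℂ) :
    (∑ k : Fin K, ∑ k' : Fin K,
        (starRingEnd ℂ) (z k) * z k'
          * Complex.exp (-Complex.I * ((((starRingEnd ℂ) (θ k) * θ k').im : ℝ)) / 2)
          * E (θ k - θ k')).im = 0
    ∧ 0 ≤ (∑ k : Fin K, ∑ k' : Fin K,
        (starRingEnd ℂ) (z k) * z k'
          * Complex.exp (-Complex.I * ((((starRingEnd ℂ) (θ k) * θ k').im : ℝ)) / 2)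
          * E (θ k - θ k')).re := by
  set s : ℝ := (c - 1) / 2 with hs_def
  have hs : 0 ≤ s := by simp only [hs_def]; linarith
  set rs : ℝ := Real.sqrt s with hrs_def
  set r2 : ℝ := Real.sqrt 2 with hr2_def
  have h2 : (r2 : ℂ) * (r2 : ℂ) = 2 := by
    rw [← Complex.ofReal_mul, Real.mul_self_sqrt (by norm_num)]; norm_num
  have hss : (rs : ℂ) * (rs : ℂ) = (s : ℂ) := by
    rw [← Complex.ofReal_mul, Real.mul_self_sqrt hs]
  set u : Fin 3 → Fin K → ℂ := fun i k =>
    ![θ k / (r2 : ℂ), ((rs * (θ k).re : ℝ) : ℂ), ((rs * (θ k).im : ℝ) : ℂ)] i with hu_def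
  set B : Fin K → Fin K → ℂ := fun k k' => ∑ i : Fin 3, u i k * (starRingEnd ℂ) (u i k')
    with hB_def
  have hB : ∀ k k', B k k' = θ k * (starRingEnd ℂ) (θ k') / 2
      + ((s * ((θ k).re * (θ k').re + (θ k).im * (θ k').im) : ℝ) : ℂ) := by
    intro k k'
    rw [hB_def]
    simp only [Fin.sum_univ_three, hu_def, Matrix.cons_val_zero, Matrix.cons_val_one,
      Matrix.head_cons, Matrix.cons_val_two, Matrix.tail_cons]
    simp only [map_div₀, Complex.ofReal_mul, map_mul, Complex.conj_ofReal]
    field_simp [h2]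
    ring_nf
    rw [show ((rs:ℂ))^2 = (s:ℂ) by rw [sq, hss], hs_def]
    push_cast
    have h2i : ((r2:ℂ))⁻¹ ^ 2 = 1/2 := by rw [inv_pow, sq, h2]; norm_num
    linear_combination (2 * θ k * (starRingEnd ℂ) (θ k')) * h2i
  have hentry : ∀ k k',
      Complex.exp (-Complex.I * ((((starRingEnd ℂ) (θ k) * θ k').im : ℝ)) / 2)
          * E (θ k - θ k')
        = ((Real.exp (-(c * ‖θ k‖ ^ 2 / 4)) : ℝ) : ℂ)
          * ((Real.exp (-(c * ‖θ k'‖ ^ 2 / 4)) : ℝ) : ℂ)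
          * Complex.exp (B k k') := by
    intro k k'
    rw [hE, Complex.ofReal_exp, Complex.ofReal_exp, ← Complex.exp_add, ← Complex.exp_add,
      ← Complex.exp_add]
    congr 1
    rw [hB]
    rw [Complex.ext_iff]
    constructor
    · simp [Complex.sq_norm, Complex.normSq_apply]
      ring
    · simp [Complex.sq_norm, Complex.normSq_apply]
      ring
  set a : Fin K → ℂ := fun k => z k * ((Real.exp (-(c * ‖θ k‖ ^ 2 / 4)) : ℝ) : ℂ)
    with ha_def
  set S : ℂ := ∑ k : Fin K, ∑ k' : Fin K,
      (starRingEnd ℂ) (z k) * z k'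
        * Complex.exp (-Complex.I * ((((starRingEnd ℂ) (θ k) * θ k').im : ℝ)) / 2)
        * E (θ k - θ k') with hS_def
  have hSrw : S = ∑ k : Fin K, ∑ k' : Fin K,
      (starRingEnd ℂ) (a k) * a k' * Complex.exp (B k k') := by
    rw [hS_def]
    refine Finset.sum_congr rfl fun k _ => Finset.sum_congr rfl fun k' _ => ?_
    rw [mul_assoc, hentry k k', ha_def]
    simp only [map_mul, Complex.conj_ofReal]
    ring
  -- the exponential series termwise
  have hBsum : ∀ k k' : Fin K,
      HasSum (fun n : ℕ => (starRingEnd ℂ) (a k) * a k' * ((B k k') ^ n / (n ! : ℂ)))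
        ((starRingEnd ℂ) (a k) * a k' * Complex.exp (B k k')) := by
    intro k k'
    have := NormedSpace.expSeries_div_hasSum_exp (B k k')
    rw [← Complex.exp_eq_exp_ℂ] at this
    exact this.mul_left _
  have hSsum : HasSum (fun n : ℕ => ∑ k : Fin K, ∑ k' : Fin K,
      (starRingEnd ℂ) (a k) * a k' * ((B k k') ^ n / (n ! : ℂ))) S := by
    rw [hSrw]
    exact hasSum_sum fun k _ => hasSum_sum fun k' _ => hBsum k k'
  set g : ℕ → ℝ := fun n =>
    (∑ f : Fin n → Fin 3,
      Complex.normSq (∑ k : Fin K, a k * (starRingEnd ℂ) (∏ j, u (f j) k))) / n !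
    with hg_def
  have hterm : ∀ n : ℕ, (∑ k : Fin K, ∑ k' : Fin K,
      (starRingEnd ℂ) (a k) * a k' * ((B k k') ^ n / (n ! : ℂ))) = ((g n : ℝ) : ℂ) := by
    intro n
    have key := qf_pow a u n
    simp_rw [mul_div_assoc', ← Finset.sum_div]
    simp only [hB_def]
    rw [key, hg_def]
    push_cast
    ring
  have hg_nonneg : ∀ n, 0 ≤ g n := by
    intro n
    rw [hg_def]
    apply div_nonneg _ (Nat.cast_nonneg _)
    exact Finset.sum_nonneg fun f _ => Complex.normSq_nonneg _
  have hre : HasSum g S.re := by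
    have := hSsum.mapL Complex.reCLM
    simp only [Complex.reCLM_apply] at this
    convert this using 2 with n
    rw [hterm n]
    simp
  have him : S.im = 0 := by
    have := hSsum.mapL Complex.imCLM
    simp only [Complex.imCLM_apply] at this
    have h0 : HasSum (fun _ : ℕ => (0 : ℝ)) S.im := by
      convert this using 2 with n
      rw [hterm n]
      simp
    simpa using h0.unique hasSum_zero
  exact ⟨him, hre.nonneg hg_nonneg⟩
end

section
/- Intertwining of embedding with one-step evolution matrices: for the (m+2)×(m+2) matrix U_{ℓ+1}^{σ(m+1)} and the (m+1)×(m+1) matrix U_ℓ^{σ(m)}, and the embedding r_{m+1,m} : ℂ^{m+1} → ℂ^{m+2} inserting a zero at position 1, one has U_{ℓ+1}^{σ(m+1)} ∘ r_{m+1,m} = r_{m+1,m} ∘ U_ℓ^{σ(m)} for all 1 ≤ ℓ ≤ m. -/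
/-- The one-step evolution matrix `U_ℓ^{σ(k)}` of size `(k+1)×(k+1)`:
row 0 is `c·g·(z⁺δ_{j0} + wδ_{jℓ})`, row `ℓ` is `c·g·(wδ_{j0} + z⁻δ_{jℓ})`,
all other rows are `c·δ_{ij}`. -/
def Umat (k ℓ : ℕ) (c g w zp zm : ℂ) : Matrix (Fin (k + 1)) (Fin (k + 1)) ℂ :=
  fun i j =>
    if (i : ℕ) = 0 then
      c * g * ((if (j : ℕ) = 0 then zp else 0) + (if (j : ℕ) = ℓ then w else 0))
    else if (i : ℕ) = ℓ then
      c * g * ((if (j : ℕ) = 0 then w else 0) + (if (j : ℕ) = ℓ then zm else 0))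
    else if i = j then c else 0

/-- The embedding `r_{m+1,m} : ℂ^{m+1} → ℂ^{m+2}` inserting a `0` at position 1. -/
def remb (m : ℕ) (ζ : Fin (m + 1) → ℂ) : Fin (m + 2) → ℂ :=
  Fin.cons (ζ 0) (Fin.cons 0 (Fin.tail ζ))


lemma Umat_mulVec (k l : ℕ) (hl : l ≤ k) (c g w zp zm : ℂ) (v : Fin (k+1) → ℂ)
    (i : Fin (k+1)) :
    Matrix.mulVec (Umat k l c g w zp zm) v i =
      if (i : ℕ) = 0 then c * g * (zp * v 0 + w * v ⟨l, by omega⟩)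
      else if (i : ℕ) = l then c * g * (w * v 0 + zm * v ⟨l, by omega⟩)
      else c * v i := by
  have h0 : ∀ j : Fin (k+1), ((j : ℕ) = 0) = (j = (0 : Fin (k+1))) := by
    intro j; exact propext ⟨fun h => Fin.ext h, fun h => by subst h; simp⟩
  have hL : ∀ j : Fin (k+1), ((j : ℕ) = l) = (j = (⟨l, by omega⟩ : Fin (k+1))) := by
    intro j; exact propext ⟨fun h => Fin.ext h, fun h => by subst h; simp⟩
  simp only [Matrix.mulVec, dotProduct, Umat, h0, hL]
  split_ifs with hi hil
  · simp only [mul_add, add_mul, mul_ite, ite_mul, mul_zero, zero_mul,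
      Finset.sum_add_distrib, Finset.sum_ite_eq', Finset.mem_univ, if_true]
    ring
  · simp only [mul_add, add_mul, mul_ite, ite_mul, mul_zero, zero_mul,
      Finset.sum_add_distrib, Finset.sum_ite_eq', Finset.mem_univ, if_true]
    ring
  · simp [dotProduct, ite_mul, Finset.sum_ite_eq']

lemma remb_apply (m : ℕ) (ζ : Fin (m+1) → ℂ) (i : Fin (m+2)) :
    remb m ζ i = if _h0 : (i : ℕ) = 0 then ζ 0 else if (i : ℕ) = 1 then 0
      else ζ ⟨(i : ℕ) - 1, by omega⟩ := by
  obtain ⟨iv, hi⟩ := i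
  match iv, hi with
  | 0, hi => simp [remb]
  | 1, hi =>
    have h : (⟨1, hi⟩ : Fin (m+2)) = Fin.succ 0 := rfl
    simp [remb, h]
  | n+2, hi =>
    have h : (⟨n+2, hi⟩ : Fin (m+2)) = Fin.succ (Fin.succ ⟨n, by omega⟩) := rfl
    rw [remb, h]
    simp only [Fin.cons_succ, Fin.tail, Fin.val_succ]
    rw [dif_neg (by omega), if_neg (by omega)]
    exact congrArg ζ (by apply Fin.ext; simp)

/-- `U_{ℓ+1}^{σ(m+1)} ∘ r_{m+1,m} = r_{m+1,m} ∘ U_ℓ^{σ(m)}` for `1 ≤ ℓ ≤ m`. -/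
theorem Umat_remb_intertwine (m ℓ : ℕ) (h1 : 1 ≤ ℓ) (h2 : ℓ ≤ m)
    (c g w zp zm : ℂ) (ζ : Fin (m + 1) → ℂ) :
    Matrix.mulVec (Umat (m + 1) (ℓ + 1) c g w zp zm) (remb m ζ)
      = remb m (Matrix.mulVec (Umat m ℓ c g w zp zm) ζ) := by
  funext i
  rw [Umat_mulVec (m+1) (ℓ+1) (by omega), remb_apply]
  simp only [Umat_mulVec m ℓ h2, remb_apply]
  split_ifs <;> first
    | rfl | omega
    | (simp_all)
end

section
/- One-step stationarity of the limiting characteristic function: let q = c·g·z and p = c·g·w with |gz| < 1, κ := (σ₋+σ₊)/(σ₋−σ₊) > 0, and let F₁ : ℂ → ℂ be such that D(θ) := ∏_{s=0}^∞ F₁((gz)^s θ) converges. Define E_*(θ) := exp[−(|θ|²/4)·κ·(1 − |gw|²/(1−|gz|²))] · D(gw·θ). Then for all θ ∈ ℂ: exp[−(κ/4)(|θ|² − |gzθ|² − |gwθ|²)] · E_*(qθ) · F₁(pθ) = E_*(e^{i arg c}·θ) whenever |c| = 1 and F₁ depends only on |θ| (F₁ is rotation invariant). -/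
/-- one-step stationarity of the limiting characteristic function
`E_*(θ) = exp[−(|θ|²/4)κ(1 − |gw|²/(1−|gz|²))]·D(gwθ)` for the repeated
interaction system, where `q = cgz`, `p = cgw`, `|c| = 1`, `|gz| < 1`,
`κ = (σ₋+σ₊)/(σ₋−σ₊)`, and `F₁` is rotation invariant with convergent product
`D(θ) = ∏_{s≥0} F₁((gz)^s θ)`. -/
theorem one_step_stationarity (g z w c : ℂ) (hc : ‖c‖ = 1)
    (hgz : ‖(g * z)‖ < 1)
    (σp σm : ℝ) (hσ : 0 ≤ σp) (hσσ : σp < σm)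
    (κ : ℝ) (hκ : κ = (σm + σp) / (σm - σp))
    (F₁ D : ℂ → ℂ)
    (hrot : ∀ (φ : ℝ) (θ : ℂ), F₁ (Complex.exp (Complex.I * φ) * θ) = F₁ θ)
    (hD : ∀ θ : ℂ, Filter.Tendsto
      (fun n : ℕ => ∏ s ∈ Finset.range n, F₁ ((g * z) ^ s * θ))
      Filter.atTop (nhds (D θ)))
    (Estar : ℂ → ℂ)
    (hEstar : ∀ θ : ℂ, Estar θ
      = Complex.exp (-((‖θ‖ ^ 2 / 4) * κ
          * (1 - ‖(g * w)‖ ^ 2 / (1 - ‖(g * z)‖ ^ 2)) : ℝ))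
        * D (g * w * θ))
    (θ : ℂ) :
    Complex.exp (-((κ / 4) * (‖θ‖ ^ 2
        - ‖(g * z * θ)‖ ^ 2 - ‖(g * w * θ)‖ ^ 2) : ℝ))
      * Estar (c * g * z * θ) * F₁ (c * g * w * θ)
    = Estar (Complex.exp (Complex.I * (Complex.arg c : ℝ)) * θ) := by
  -- c = exp(I * arg c)
  have hcexp : Complex.exp (Complex.I * (Complex.arg c : ℝ)) = c := by
    rw [mul_comm]
    have := Complex.norm_mul_exp_arg_mul_I c
    rw [hc] at this; simpa using this
  -- D recursion
  have hDrec : ∀ τ : ℂ, D τ = F₁ τ * D (g * z * τ) := by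
    intro τ
    have h1 : Filter.Tendsto
        (fun n : ℕ => ∏ s ∈ Finset.range (n + 1), F₁ ((g * z) ^ s * τ))
        Filter.atTop (nhds (D τ)) :=
      (hD τ).comp (Filter.tendsto_add_atTop_nat 1)
    have h2 : Filter.Tendsto
        (fun n : ℕ => ∏ s ∈ Finset.range (n + 1), F₁ ((g * z) ^ s * τ))
        Filter.atTop (nhds (F₁ τ * D (g * z * τ))) := by
      have heq : ∀ n : ℕ, ∏ s ∈ Finset.range (n + 1), F₁ ((g * z) ^ s * τ)
          = F₁ τ * ∏ s ∈ Finset.range n, F₁ ((g * z) ^ s * (g * z * τ)) := by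
        intro n
        rw [Finset.prod_range_succ']
        simp only [pow_zero, one_mul]
        rw [mul_comm]
        congr 1
        refine Finset.prod_congr rfl fun s _ => ?_
        ring_nf
      simp only [heq]
      exact (hD (g * z * τ)).const_mul _
    exact tendsto_nhds_unique h1 h2
  rw [hcexp, hEstar, hEstar, hDrec (g * w * (c * θ))]
  have habs : ∀ a b : ℂ, ‖(a * b)‖ = ‖a‖ * ‖b‖ :=
    fun a b => norm_mul a b
  have h1 : (1 : ℝ) - (‖(g * z)‖) ^ 2 ≠ 0 := by
    have h2 : (‖(g * z)‖) ^ 2 < 1 := by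
      nlinarith [norm_nonneg (g * z)]
    nlinarith
  have hFa : g * w * (c * θ) = c * g * w * θ := by ring
  have hDa : g * z * (c * g * w * θ) = g * w * (c * g * z * θ) := by ring
  have habs1 : ‖(c * g * z * θ)‖ = ‖(g * z * θ)‖ := by
    rw [show c * g * z * θ = c * (g * z * θ) by ring, habs, hc, one_mul]
  have habs2 : ‖(c * θ)‖ = ‖θ‖ := by
    rw [habs, hc, one_mul]
  rw [hFa, hDa, habs1, habs2]
  set A := (κ / 4 * ((‖θ‖) ^ 2
      - (‖(g * z * θ)‖) ^ 2 - (‖(g * w * θ)‖) ^ 2) : ℝ) with hA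
  set B := ((‖(g * z * θ)‖) ^ 2 / 4 * κ
      * (1 - (‖(g * w)‖) ^ 2 / (1 - (‖(g * z)‖) ^ 2)) : ℝ) with hB
  set C := ((‖θ‖) ^ 2 / 4 * κ
      * (1 - (‖(g * w)‖) ^ 2 / (1 - (‖(g * z)‖) ^ 2)) : ℝ) with hC
  have hABC : -A + -B = -C := by
    have e1 : (‖(g * z * θ)‖) ^ 2
        = (‖(g * z)‖) ^ 2 * (‖θ‖) ^ 2 := by
      rw [habs]; ring
    have e2 : (‖(g * w * θ)‖) ^ 2
        = (‖(g * w)‖) ^ 2 * (‖θ‖) ^ 2 := by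
      rw [habs]; ring
    rw [hA, hB, hC, e1, e2]
    generalize hgen : ‖(g * z)‖ = a at h1 ⊢
    field_simp
    ring
  have key : Complex.exp (-(A : ℂ)) * Complex.exp (-(B : ℂ)) = Complex.exp (-(C : ℂ)) := by
    rw [← Complex.exp_add]
    congr 1
    exact_mod_cast hABC
  calc Complex.exp (-(A : ℂ)) * (Complex.exp (-(B : ℂ)) * D (g * w * (c * g * z * θ)))
        * F₁ (c * g * w * θ)
      = (Complex.exp (-(A : ℂ)) * Complex.exp (-(B : ℂ)))
        * (F₁ (c * g * w * θ) * D (g * w * (c * g * z * θ))) := by ring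
    _ = Complex.exp (-(C : ℂ)) * (F₁ (c * g * w * θ) * D (g * w * (c * g * z * θ))) := by
        rw [key]
end

section
/- Convergence of the N-step characteristic function: under |gz| < 1 and convergence of D(θ) = ∏_{s=0}^∞ F₁((gz)^s θ), and assuming F₀, F₁ are rotation-invariant characteristic-type functions with F₀ continuous at 0 and F₀(0)=1, the sequence E_N(θ) := exp[−(|θ|²κ/4)(1−|gz|^{2N})(1−|gw|²/(1−|gz|²))] · F₀((gz)^N θ) · ∏_{k=1}^N F₁(g w (gz)^{N-k} θ) converges pointwise as N → ∞ to E_*(θ) = exp[−(|θ|²κ/4)(1−|gw|²/(1−|gz|²))]·D(gwθ). -/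
/-- pointwise convergence of the `N`-step characteristic function
`E_N(θ)` of the cavity to the limiting characteristic function
`E_*(θ) = exp[−(|θ|²κ/4)(1−|gw|²/(1−|gz|²))]·D(gwθ)`. -/
theorem N_step_convergence (g z w : ℂ) (hgz : ‖g * z‖ < 1)
    (κ : ℝ) (hκ : 0 < κ)
    (F₀ F₁ D : ℂ → ℂ)
    (hF₀cont : ContinuousAt F₀ 0) (hF₀0 : F₀ 0 = 1)
    (hF₀bd : ∀ θ : ℂ, ‖F₀ θ‖ ≤ 1)
    (hF₁bd : ∀ θ : ℂ, ‖F₁ θ‖ ≤ 1)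
    (hrot₀ : ∀ (φ : ℝ) (θ : ℂ), F₀ (Complex.exp (Complex.I * φ) * θ) = F₀ θ)
    (hrot₁ : ∀ (φ : ℝ) (θ : ℂ), F₁ (Complex.exp (Complex.I * φ) * θ) = F₁ θ)
    (hD : ∀ θ : ℂ, Filter.Tendsto
      (fun n : ℕ => ∏ s ∈ Finset.range n, F₁ ((g * z) ^ s * θ))
      Filter.atTop (nhds (D θ)))
    (θ : ℂ) :
    Filter.Tendsto
      (fun N : ℕ =>
        Complex.exp (-(((‖θ‖) ^ 2 * κ / 4)
            * (1 - (‖g * z‖) ^ (2 * N))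
            * (1 - (‖g * w‖) ^ 2 / (1 - (‖g * z‖) ^ 2)) : ℝ))
          * F₀ ((g * z) ^ N * θ)
          * ∏ k ∈ Finset.Icc 1 N, F₁ (g * w * (g * z) ^ (N - k) * θ))
      Filter.atTop
      (nhds (Complex.exp (-(((‖θ‖) ^ 2 * κ / 4)
            * (1 - (‖g * w‖) ^ 2 / (1 - (‖g * z‖) ^ 2)) : ℝ))
          * D (g * w * θ))) := by

  set c : ℝ := (‖θ‖) ^ 2 * κ / 4 with hc
  set d : ℝ := 1 - (‖g * w‖) ^ 2 / (1 - (‖g * z‖) ^ 2) with hd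
  -- exponential factor
  have hpow : Filter.Tendsto (fun N : ℕ => (‖g * z‖) ^ (2 * N))
      Filter.atTop (nhds 0) := by
    have h2 : ((‖g * z‖) ^ 2 : ℝ) < 1 :=
      pow_lt_one₀ (norm_nonneg _) hgz (by norm_num)
    have := tendsto_pow_atTop_nhds_zero_of_lt_one
      (pow_nonneg (norm_nonneg _) 2) h2
    simpa [pow_mul] using this
  have h1 : Filter.Tendsto
      (fun N : ℕ => Complex.exp (-(c * (1 - (‖g * z‖) ^ (2 * N)) * d) : ℝ))
      Filter.atTop (nhds (Complex.exp (-(c * d) : ℝ))) := by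
    have harg : Filter.Tendsto
        (fun N : ℕ => (-(c * (1 - (‖g * z‖) ^ (2 * N)) * d) : ℝ))
        Filter.atTop (nhds (-(c * d))) := by
      have : Filter.Tendsto
          (fun N : ℕ => c * (1 - (‖g * z‖) ^ (2 * N)) * d)
          Filter.atTop (nhds (c * (1 - 0) * d)) :=
        (((tendsto_const_nhds.sub hpow).const_mul c).mul_const d)
      simpa using this.neg
    exact (Complex.continuous_exp.comp Complex.continuous_ofReal).continuousAt.tendsto.comp harg
  -- F₀ factor
  have h2 : Filter.Tendsto (fun N : ℕ => F₀ ((g * z) ^ N * θ)) Filter.atTop (nhds 1) := by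
    have hz0 : Filter.Tendsto (fun N : ℕ => (g * z) ^ N * θ) Filter.atTop (nhds 0) := by
      have := tendsto_pow_atTop_nhds_zero_of_norm_lt_one (x := g * z) (by simpa using hgz)
      simpa using this.mul_const θ
    have := hF₀cont.tendsto.comp hz0
    simpa [hF₀0, Function.comp_def] using this
  -- product factor
  have h3 : Filter.Tendsto
      (fun N : ℕ => ∏ k ∈ Finset.Icc 1 N, F₁ (g * w * (g * z) ^ (N - k) * θ))
      Filter.atTop (nhds (D (g * w * θ))) := by
    have hre : ∀ N : ℕ, (∏ k ∈ Finset.Icc 1 N, F₁ (g * w * (g * z) ^ (N - k) * θ))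
        = ∏ s ∈ Finset.range N, F₁ ((g * z) ^ s * (g * w * θ)) := by
      intro N
      refine Finset.prod_nbij' (fun k => N - k) (fun s => N - s) ?_ ?_ ?_ ?_ ?_
      · intro k hk
        simp only [Finset.mem_Icc] at hk
        simp only [Finset.mem_range]
        omega
      · intro s hs
        simp only [Finset.mem_range] at hs
        simp only [Finset.mem_Icc]
        omega
      · intro k hk
        simp only [Finset.mem_Icc] at hk
        show N - (N - k) = k
        omega
      · intro s hs
        simp only [Finset.mem_range] at hs
        show N - (N - s) = s
        omega
      · intro k hk
        ring_nf
    exact Filter.Tendsto.congr (fun N => (hre N).symm) (hD (g * w * θ))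
  have := (h1.mul h2).mul h3
  simpa using this
end
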